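/- Let S be an almost unit-stabilized finite commutative unital semigroup with D(S) = D(U(S)). Then for every finite commutative unital semigroup S', D(S × S') = D(U(S) × S'). -/

import Mathlib

/-- A list (sequence) in a commutative monoid is reducible if a proper
subsequence has the same product. -/
def Reducible {M : Type*} [CommMonoid M] (A : List M) : Prop :=
  ∃ B : List M, List.Sublist B A ∧ B.length < A.length ∧ B.prod = A.prod

/-- The Davenport constant: the least positive `n` such that every sequence of
length `n` is reducible (`⊤` if none exists). -/
noncomputable def davenport (M : Type*) [CommMonoid M] : ℕ∞ :=
  sInf {k : ℕ∞ | ∃ n : ℕ, k = n ∧ 0 < n ∧ ∀ A : List M, A.length = n → Reducible A}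

/-- An ideal of a commutative monoid. -/
def IsMulIdeal {M : Type*} [CommMonoid M] (T : Set M) : Prop :=
  ∀ s t : M, t ∈ T → s * t ∈ T

/-- The relative Davenport constant `D(S, T)`: the least positive `n` such
that every sequence of length `n` with product in `T` is reducible. -/
noncomputable def davenportRel (M : Type*) [CommMonoid M] (T : Set M) : ℕ∞ :=
  sInf {k : ℕ∞ | ∃ n : ℕ, k = n ∧ 0 < n ∧
    ∀ A : List M, A.length = n → A.prod ∈ T → Reducible A}

/-- `(S, T)` is a unit-stabilized pair. -/
def UnitStabilizedPair (M : Type*) [CommMonoid M] (T : Set M) : Prop :=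
  ∀ a b : M, a * b ∉ T →
    {u : Mˣ | (u : M) * a = a} = {u : Mˣ | (u : M) * (a * b) = a * b} →
    ∃ u : Mˣ, a * b = a * u

set_option linter.unusedSectionVars false

namespace DavAux

open List

variable {M : Type*} [CommMonoid M]

lemma fst_prod {N : Type*} [CommMonoid N] (l : List (M × N)) :
    l.prod.1 = (l.map Prod.fst).prod := by
  rw [← MonoidHom.coe_fst (M := M) (N := N)]
  exact (MonoidHom.fst M N).map_list_prod l

lemma snd_prod {N : Type*} [CommMonoid N] (l : List (M × N)) :
    l.prod.2 = (l.map Prod.snd).prod := by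
  rw [← MonoidHom.coe_snd (M := M) (N := N)]
  exact (MonoidHom.snd M N).map_list_prod l

def good (M : Type*) [CommMonoid M] (n : ℕ) : Prop :=
  0 < n ∧ ∀ A : List M, A.length = n → Reducible A

noncomputable def dav (M : Type*) [CommMonoid M] : ℕ := sInf {n | good M n}

lemma reducible_of_good {n : ℕ} (hn : 0 < n)
    (h : ∀ A : List M, A.length = n → Reducible A) :
    ∀ A : List M, n ≤ A.length → Reducible A := by
  intro A
  induction A with
  | nil => intro hA; simp at hA; omega
  | cons a A ih =>
    intro hA
    by_cases h' : (a :: A).length = n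
    · exact h _ h'
    · have hA' : n ≤ A.length := by simp at hA h' ⊢; omega
      obtain ⟨B, hB, hlen, hprod⟩ := ih hA'
      exact ⟨a :: B, hB.cons₂ a, by simpa using hlen, by simp [hprod]⟩

lemma red_of_take_eq {A : List M} {i j : ℕ} (hij : i < j) (hj : j ≤ A.length)
    (h : (A.take i).prod = (A.take j).prod) : Reducible A := by
  refine ⟨A.take i ++ A.drop j, ?_, ?_, ?_⟩
  · have h1 : A.take i <+ A.take j := by
      have := List.take_sublist i (A.take j)
      rwa [List.take_take, min_eq_left hij.le] at this
    have h2 := h1.append (List.Sublist.refl (A.drop j))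
    rwa [List.take_append_drop] at h2
  · simp only [List.length_append, List.length_take, List.length_drop]
    omega
  · rw [List.prod_append, h, List.prod_take_mul_prod_drop]

lemma good_card [Finite M] : good M (Nat.card M) := by
  have hc : 0 < Nat.card M := Nat.card_pos
  refine ⟨hc, fun A hA => ?_⟩
  cases nonempty_fintype M
  have hcard : Fintype.card M < Fintype.card (Fin (Nat.card M + 1)) := by
    simp [Nat.card_eq_fintype_card]
  obtain ⟨i, j, hne, hij⟩ := Fintype.exists_ne_map_eq_of_card_lt
    (fun k : Fin (Nat.card M + 1) => (A.take (k : ℕ)).prod) hcard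
  have hjle : ∀ k : Fin (Nat.card M + 1), (k : ℕ) ≤ A.length := by
    intro k; rw [hA]; omega
  rcases lt_or_gt_of_ne (fun hc' : (i : ℕ) = (j : ℕ) => hne (Fin.ext hc')) with hlt | hlt
  · exact red_of_take_eq hlt (hjle j) hij
  · exact red_of_take_eq hlt (hjle i) hij.symm

lemma dav_good [Finite M] : good M (dav M) := Nat.sInf_mem (s := {n | good M n}) ⟨_, good_card⟩

lemma dav_pos [Finite M] : 0 < dav M := (dav_good).1

lemma reducible_of_dav_le [Finite M] {A : List M} (h : dav M ≤ A.length) : Reducible A :=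
  reducible_of_good dav_pos dav_good.2 A h

lemma exists_not_reducible {ℓ : ℕ} (h : ℓ < dav M) :
    ∃ A : List M, A.length = ℓ ∧ ¬Reducible A := by
  by_cases h0 : ℓ = 0
  · refine ⟨[], by simp [h0], ?_⟩
    rintro ⟨B, hB, hl, -⟩; simp at hl
  · by_contra hcon
    push_neg at hcon
    have hg : good M ℓ := ⟨Nat.pos_of_ne_zero h0, fun A hA => hcon A hA⟩
    have : dav M ≤ ℓ := Nat.sInf_le hg
    omega

lemma dav_lt_of_not_red [Finite M] {A : List M} (h : ¬ Reducible A) : A.length < dav M := by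
  by_contra h'
  push_neg at h'
  exact h (reducible_of_dav_le h')

lemma reducible_of_map {N : Type*} [CommMonoid N] (f : M →* N) (hf : Function.Injective f)
    {A : List M} (h : Reducible (A.map f)) : Reducible A := by
  obtain ⟨B, hB, hlen, hprod⟩ := h
  obtain ⟨B₀, hB₀, rfl⟩ := List.sublist_map_iff.1 hB
  refine ⟨B₀, hB₀, by simpa using hlen, hf ?_⟩
  rw [← MonoidHom.map_list_prod, ← MonoidHom.map_list_prod] at hprod
  exact hprod

lemma dav_le_of_inj {N : Type*} [CommMonoid N] [Finite M] [Finite N]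
    (f : M →* N) (hf : Function.Injective f) : dav M ≤ dav N := by
  by_contra h
  push_neg at h
  obtain ⟨A, hA, hnr⟩ := exists_not_reducible (M := M) h
  have h2 : ¬ Reducible (A.map f) := fun hr => hnr (reducible_of_map f hf hr)
  have h3 := dav_lt_of_not_red h2
  rw [List.length_map, hA] at h3
  omega

lemma reducible_of_perm {A A' : List M} (hp : A.Perm A') (h : Reducible A') : Reducible A := by
  obtain ⟨B, hB, hlen, hprod⟩ := h
  obtain ⟨C, hperm, hsub⟩ := (hB.subperm).trans hp.symm.subperm
  refine ⟨C, hsub, ?_, ?_⟩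
  · rw [hperm.length_eq, ← hp.length_eq] at *; exact hlen
  · rw [hperm.prod_eq, hprod, hp.prod_eq]

lemma davenport_eq [Finite M] : davenport M = (dav M : ℕ∞) := by
  apply _root_.le_antisymm
  · exact sInf_le ⟨dav M, rfl, dav_good⟩
  · apply le_sInf
    rintro k ⟨n, rfl, hn⟩
    exact_mod_cast Nat.sInf_le hn

end DavAux

namespace DavAux

open List

lemma dav_lower {M N P : Type*} [CommMonoid M] [CommMonoid N] [CommMonoid P]
    [Finite M] [Finite N] [Finite P]
    (φ : M →* N) (ι : P →* M) (σ : N → M)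
    (hσ : ∀ x, φ (σ x) = x) (hι : ∀ p, φ (ι p) = 1)
    (hcancel : ∀ (c : M) (a b : P), c * ι a = c * ι b → a = b) :
    dav N + dav P ≤ dav M + 1 := by
  obtain ⟨X, hXlen, hX⟩ := exists_not_reducible (M := N) (Nat.sub_lt dav_pos Nat.one_pos)
  obtain ⟨Y, hYlen, hY⟩ := exists_not_reducible (M := P) (Nat.sub_lt dav_pos Nat.one_pos)
  have hnr : ¬ Reducible (X.map σ ++ Y.map ι) := by
    rintro ⟨Z, hZ, hZlen, hZprod⟩
    obtain ⟨Z₁, Z₂, rfl, hZ1, hZ2⟩ := List.sublist_append_iff.1 hZ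
    obtain ⟨X', hX', rfl⟩ := List.sublist_map_iff.1 hZ1
    obtain ⟨Y', hY', rfl⟩ := List.sublist_map_iff.1 hZ2
    have hmapσ : ∀ L : List N, ((L.map σ).map φ).prod = L.prod := by
      intro L; rw [List.map_map]
      congr 1
      rw [show φ ∘ σ = id from funext hσ, List.map_id]
    have hmapι : ∀ L : List P, ((L.map ι).map φ).prod = 1 := by
      intro L; rw [List.map_map]
      apply List.prod_eq_one
      intro x hx
      obtain ⟨p, -, rfl⟩ := List.mem_map.1 hx
      exact hι p
    have hprojX : X'.prod = X.prod := by
      have h1 := congrArg φ hZprod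
      rw [MonoidHom.map_list_prod, MonoidHom.map_list_prod, List.map_append,
        List.map_append, List.prod_append, List.prod_append] at h1
      rw [← hmapσ X', ← hmapσ X]
      have h2 := hmapι Y'
      have h3 := hmapι Y
      rw [h2, h3, mul_one, mul_one] at h1
      exact h1
    have hX'eq : X' = X := by
      have hle := hX'.length_le
      have hnlt : ¬(X'.length < X.length) := fun hlt => hX ⟨X', hX', hlt, hprojX⟩
      exact hX'.eq_of_length (by omega)
    subst hX'eq
    have hYprod : Y'.prod = Y.prod := by
      apply hcancel ((X'.map σ).prod)
      rw [List.prod_append, List.prod_append] at hZprod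
      rw [← MonoidHom.map_list_prod, ← MonoidHom.map_list_prod] at hZprod
      exact hZprod
    have hY'eq : Y' = Y := by
      have hle := hY'.length_le
      have hnlt : ¬(Y'.length < Y.length) := fun hlt => hY ⟨Y', hY', hlt, hYprod⟩
      exact hY'.eq_of_length (by omega)
    subst hY'eq
    simp at hZlen
  have hlen := dav_lt_of_not_red hnr
  rw [List.length_append, List.length_map, List.length_map, hXlen, hYlen] at hlen
  have h1 : 0 < dav N := dav_pos
  have h2 : 0 < dav P := dav_pos
  omega

lemma chain_not_reducible {G : Type*} [CommGroup G] :
    ∀ (gs : List G), (∀ (i : ℕ) (hi : i < gs.length),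
      gs[i] ∉ Subgroup.closure {x | x ∈ gs.take i}) → ¬ Reducible gs := by
  intro gs
  induction gs using List.reverseRecOn with
  | nil =>
    rintro - ⟨B, hB, hl, -⟩; simp at hl
  | append_singleton gs g ih =>
    intro hcond
    rintro ⟨B, hB, hlen, hprod⟩
    obtain ⟨B₁, B₂, rfl, h1, h2⟩ := List.sublist_append_iff.1 hB
    have hprodgs : (gs ++ [g]).prod = gs.prod * g := by simp
    rcases List.sublist_singleton.1 h2 with rfl | rfl
    · -- B₂ = [], so g is omitted
      have hmem : g ∈ Subgroup.closure {x | x ∈ gs} := by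
        have hBmem : B₁.prod ∈ Subgroup.closure {x | x ∈ gs} := by
          apply Subgroup.list_prod_mem
          intro x hx
          exact Subgroup.subset_closure (h1.subset hx)
        have hgsmem : gs.prod ∈ Subgroup.closure {x | x ∈ gs} := by
          apply Subgroup.list_prod_mem
          intro x hx
          exact Subgroup.subset_closure hx
        have hg : g = (gs.prod)⁻¹ * B₁.prod := by
          rw [List.append_nil] at hprod
          rw [hprod, hprodgs]
          group
        rw [hg]
        exact Subgroup.mul_mem _ (Subgroup.inv_mem _ hgsmem) hBmem
      have := hcond gs.length (by simp)
      rw [List.take_left] at this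
      have hget : (gs ++ [g])[gs.length] = g := by simp
      rw [hget] at this
      exact this hmem
    · -- B₂ = [g]
      have hB₁prod : B₁.prod = gs.prod := by
        rw [List.prod_append, List.prod_cons, List.prod_nil, mul_one] at hprod
        rw [hprodgs] at hprod
        exact mul_right_cancel hprod
      have hB₁len : B₁.length < gs.length := by
        simp at hlen; omega
      apply ih ?_ ⟨B₁, h1, hB₁len, hB₁prod⟩
      intro i hi
      have h3 := hcond i (by simp; omega)
      rwa [List.getElem_append_left hi, List.take_append_of_le_length hi.le] at h3

end DavAux

namespace DavAux

open List

section Stab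

variable {S : Type*} [CommMonoidWithZero S]

def stab (s : S) : Subgroup Sˣ where
  carrier := {u : Sˣ | (u : S) * s = s}
  one_mem' := by simp
  mul_mem' := by
    intro a b ha hb
    simp only [Set.mem_setOf_eq] at *
    rw [Units.val_mul, mul_assoc, hb, ha]
  inv_mem' := by
    intro a ha
    simp only [Set.mem_setOf_eq] at *
    calc ((a⁻¹ : Sˣ) : S) * s = ((a⁻¹ : Sˣ) : S) * (((a : Sˣ) : S) * s) := by rw [ha]
      _ = (((a⁻¹ * a : Sˣ)) : S) * s := by rw [Units.val_mul, mul_assoc]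
      _ = s := by simp

lemma mem_stab {u : Sˣ} {s : S} : u ∈ stab s ↔ (u : S) * s = s := Iff.rfl

lemma stab_mono (a b : S) : stab a ≤ stab (a * b) := by
  intro u hu
  rw [mem_stab] at *
  rw [← mul_assoc, hu]

lemma stab_unit_right (a : S) (v : Sˣ) : stab (a * v) = stab a := by
  ext u
  simp only [mem_stab]
  constructor
  · intro h
    rw [← mul_assoc] at h
    exact (v.isUnit).mul_right_cancel h
  · intro h
    rw [← mul_assoc, h]

lemma repl (p : S) (F : S → Sˣ) :
    ∀ (D : List S), (∀ a ∈ D, p * a = p * F a) →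
      p * D.prod = p * (D.map (fun a => (F a : S))).prod := by
  intro D
  induction D with
  | nil => simp
  | cons a D ih =>
    intro h
    have ha := h a List.mem_cons_self
    have hD := ih (fun x hx => h x (List.mem_cons_of_mem _ hx))
    simp only [List.prod_cons, List.map_cons]
    calc p * (a * D.prod) = (p * a) * D.prod := (mul_assoc _ _ _).symm
      _ = (p * (F a : S)) * D.prod := by rw [ha]
      _ = (F a : S) * (p * D.prod) := by rw [mul_comm p (F a : S), mul_assoc]
      _ = (F a : S) * (p * (D.map fun a => (F a : S)).prod) := by rw [hD]
      _ = p * ((F a : S) * (D.map fun a => (F a : S)).prod) := by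
          rw [← mul_assoc, mul_comm (F a : S) p, mul_assoc]

variable [Finite S]

lemma chain_bound (hus : UnitStabilizedPair S ({0} : Set S))
    (L : List S) (h0 : L.prod ≠ 0)
    (hmin : ∀ j, j < L.length → ∀ u : Sˣ, (L.eraseIdx j).prod ≠ L.prod * u) :
    L.length < dav ↥(stab L.prod) := by
  classical
  set m := L.length with hm
  have hstrict : ∀ j (hj : j < m), stab ((L.take j).prod) < stab ((L.take (j+1)).prod) := by
    intro j hj
    have hPj1 : (L.take (j+1)).prod = (L.take j).prod * L[j] := List.prod_take_succ L j hj
    have hle : stab ((L.take j).prod) ≤ stab ((L.take (j+1)).prod) := by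
      rw [hPj1]; exact stab_mono _ _
    rcases lt_or_eq_of_le hle with hlt | heq
    · exact hlt
    · exfalso
      have hD : (L.take (j+1)).prod * (L.drop (j+1)).prod = L.prod :=
        List.prod_take_mul_prod_drop L (j+1)
      have hnz : (L.take j).prod * L[j] ∉ ({0} : Set S) := by
        simp only [Set.mem_singleton_iff]
        intro hzero
        apply h0
        rw [← hD, hPj1, hzero, zero_mul]
      have hseteq : {u : Sˣ | (u : S) * (L.take j).prod = (L.take j).prod}
          = {u : Sˣ | (u : S) * ((L.take j).prod * L[j]) = (L.take j).prod * L[j]} := by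
        ext u
        have h2 := SetLike.ext_iff.1 heq u
        rw [mem_stab, mem_stab, hPj1] at h2
        simpa using h2
      obtain ⟨u, hu⟩ := hus ((L.take j).prod) (L[j]) hnz hseteq
      apply hmin j hj u⁻¹
      have herase : (L.eraseIdx j).prod = (L.take j).prod * (L.drop (j+1)).prod := by
        rw [List.eraseIdx_eq_take_drop_succ, List.prod_append]
      have hLprod : L.prod = ((L.take j).prod * (u : S)) * (L.drop (j+1)).prod := by
        rw [← hD, hPj1, hu]
      rw [herase, hLprod]
      calc (L.take j).prod * (L.drop (j+1)).prod
          = ((L.take j).prod * (L.drop (j+1)).prod) * ((u : S) * ((u⁻¹ : Sˣ) : S)) := by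
            rw [Units.mul_inv, mul_one]
        _ = ((L.take j).prod * (u : S)) * ((L.drop (j+1)).prod * ((u⁻¹ : Sˣ) : S)) :=
            mul_mul_mul_comm _ _ _ _
        _ = (L.take j).prod * (u : S) * (L.drop (j+1)).prod * ((u⁻¹ : Sˣ) : S) := by
            simp only [mul_assoc]
  have hsub : ∀ j, stab ((L.take j).prod) ≤ stab L.prod := by
    intro j
    have h5 := List.prod_take_mul_prod_drop L j
    calc stab ((L.take j).prod) ≤ stab ((L.take j).prod * (L.drop j).prod) := stab_mono _ _
      _ = stab L.prod := by rw [h5]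
  have hex : ∀ j, ∃ x : Sˣ, j < m → x ∈ stab ((L.take (j+1)).prod) ∧ x ∉ stab ((L.take j).prod) := by
    intro j
    by_cases hj : j < m
    · obtain ⟨x, hx1, hx2⟩ := SetLike.exists_of_lt (hstrict j hj)
      exact ⟨x, fun _ => ⟨hx1, hx2⟩⟩
    · exact ⟨1, fun h => absurd h hj⟩
  choose g hg using hex
  have hgtop : ∀ j, j < m → g j ∈ stab L.prod := fun j hj => hsub (j+1) ((hg j hj).1)
  set Glist : List ↥(stab L.prod) :=
    (List.range m).pmap (fun j hj => (⟨g j, hgtop j hj⟩ : ↥(stab L.prod)))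
      (fun j hj => List.mem_range.1 hj) with hGlist
  have hGlen : Glist.length = m := by simp [hGlist]
  have hGget : ∀ (i : ℕ) (hi : i < Glist.length), ((Glist[i]'hi : ↥(stab L.prod)) : Sˣ) = g i := by
    intro i hi
    simp [hGlist, List.getElem_pmap, List.getElem_range]
  have hnr : ¬ Reducible Glist := by
    apply chain_not_reducible
    intro i hi hmem
    have hiM : i < m := by rwa [hGlen] at hi
    have h2 : ((Glist[i]'hi : ↥(stab L.prod)) : Sˣ) ∈
        Subgroup.map (stab L.prod).subtype (Subgroup.closure {x | x ∈ Glist.take i}) :=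
      ⟨Glist[i]'hi, hmem, rfl⟩
    rw [MonoidHom.map_closure] at h2
    have h3 : Subgroup.closure ((stab L.prod).subtype '' {x | x ∈ Glist.take i})
        ≤ stab ((L.take i).prod) := by
      rw [Subgroup.closure_le]
      rintro y ⟨x, hx, rfl⟩
      obtain ⟨k, hk, hkx⟩ := List.mem_iff_getElem.1 hx
      have hk2 : k < i := by
        simp only [List.length_take] at hk
        omega
      have hkG : k < Glist.length := by omega
      have hkx2 : Glist[k]'hkG = x := by
        rw [← hkx, List.getElem_take]
      have hkm : k < m := by omega
      have hxval : (stab L.prod).subtype x = g k := by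
        rw [Subgroup.coe_subtype, ← hkx2]
        exact hGget k hkG
      rw [SetLike.mem_coe, hxval]
      have hchain : stab ((L.take (k+1)).prod) ≤ stab ((L.take i).prod) := by
        have h4 : List.take (k+1) (L.take i) = L.take (k+1) := by
          rw [List.take_take, min_eq_left (by omega)]
        have h5 := List.prod_take_mul_prod_drop (L.take i) (k+1)
        rw [h4] at h5
        calc stab ((L.take (k+1)).prod)
            ≤ stab ((L.take (k+1)).prod * ((L.take i).drop (k+1)).prod) := stab_mono _ _
          _ = stab ((L.take i).prod) := by rw [h5]
      exact hchain ((hg k hkm).1)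
    have h4 := h3 h2
    rw [hGget i hi] at h4
    exact (hg i hiM).2 h4
  have hfin := dav_lt_of_not_red hnr
  rwa [hGlen] at hfin

end Stab

end DavAux

namespace DavAux

open List

section MainCases

variable {S : Type*} [CommMonoidWithZero S] [Finite S] {S' : Type*} [CommMonoid S'] [Finite S']

lemma exists_minimal_sublist {α : Type*} (A : List α) (P : List α → Prop) (hA : P A) :
    ∃ K, K.Sublist A ∧ P K ∧ ∀ K', K'.Sublist A → P K' → K.length ≤ K'.length := by
  have hs : {ℓ | ∃ K, K.Sublist A ∧ P K ∧ K.length = ℓ}.Nonempty :=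
    ⟨A.length, A, List.Sublist.refl A, hA, rfl⟩
  obtain ⟨K, hK, hPK, hKlen⟩ := Nat.sInf_mem hs
  refine ⟨K, hK, hPK, fun K' h1 h2 => ?_⟩
  rw [hKlen]
  exact Nat.sInf_le ⟨K', h1, h2, rfl⟩

lemma prod_eq_of_components {A B : List (S × S')}
    (h1 : (A.map Prod.fst).prod = (B.map Prod.fst).prod)
    (h2 : (A.map Prod.snd).prod = (B.map Prod.snd).prod) : A.prod = B.prod := by
  refine Prod.ext_iff.2 ⟨?_, ?_⟩
  · rw [fst_prod, fst_prod]; exact h1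
  · rw [snd_prod, snd_prod]; exact h2

lemma case_zero (A : List (S × S'))
    (hπ : (A.map Prod.fst).prod = 0)
    (hlen2 : dav S + dav S' ≤ A.length + 1) : Reducible A := by
  obtain ⟨I, hIsub, hI0, hImin⟩ :=
    exists_minimal_sublist A (fun K => (K.map Prod.fst).prod = 0) hπ
  have hIlt : I.length < dav S := by
    by_contra h
    push_neg at h
    obtain ⟨B, hB, hBl, hBp⟩ := reducible_of_dav_le (M := S)
      (A := I.map Prod.fst) (by simpa using h)
    obtain ⟨I₀, hI₀, rfl⟩ := List.sublist_map_iff.1 hB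
    have hmin := hImin I₀ (hI₀.trans hIsub) (by rw [hBp]; exact hI0)
    simp only [List.length_map] at hBl
    omega
  obtain ⟨C, hC⟩ := hIsub.exists_perm_append
  have hlenAC : A.length = I.length + C.length := by
    rw [hC.length_eq, List.length_append]
  have hCl : dav S' ≤ C.length := by omega
  obtain ⟨B, hB, hBl, hBp⟩ := reducible_of_dav_le (M := S')
    (A := C.map Prod.snd) (by simpa using hCl)
  obtain ⟨E, hE, rfl⟩ := List.sublist_map_iff.1 hB
  apply reducible_of_perm hC
  refine ⟨I ++ E, (List.Sublist.refl I).append hE, ?_, ?_⟩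
  · simp only [List.length_append, List.length_map] at *
    omega
  · apply prod_eq_of_components
    · rw [List.map_append, List.map_append, List.prod_append, List.prod_append, hI0,
        zero_mul, zero_mul]
    · rw [List.map_append, List.map_append, List.prod_append, List.prod_append, hBp]

lemma case_nonzero (hus : UnitStabilizedPair S ({0} : Set S)) (A : List (S × S'))
    (hπ : (A.map Prod.fst).prod ≠ 0)
    (hlen : dav ↥(stab ((A.map Prod.fst).prod)) +
      dav ((Sˣ ⧸ stab ((A.map Prod.fst).prod)) × S') ≤ A.length + 1) :
    Reducible A := by
  classical
  set π := (A.map Prod.fst).prod with hπdef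
  set H := stab π with hHdef
  obtain ⟨K, hKsub, hKex, hKmin⟩ :=
    exists_minimal_sublist A (fun K => ∃ v : Sˣ, (K.map Prod.fst).prod = π * v)
      ⟨1, by simp [hπdef]⟩
  obtain ⟨v, hKv⟩ := hKex
  set L := K.map Prod.fst with hLdef
  have hππ : π = π * (v : S) * ((v⁻¹ : Sˣ) : S) := by
    rw [mul_assoc, Units.mul_inv, mul_one]
  have hL0 : L.prod ≠ 0 := by
    intro hz
    rw [hKv] at hz
    exact hπ (by rw [hππ, hz, zero_mul])
  have hLmin : ∀ j, j < L.length → ∀ u : Sˣ, (L.eraseIdx j).prod ≠ L.prod * u := by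
    intro j hj u heq
    have hjK : j < K.length := by
      rw [hLdef, List.length_map] at hj; exact hj
    have hmaperase : (K.eraseIdx j).map Prod.fst = L.eraseIdx j := by
      rw [hLdef, List.eraseIdx_eq_take_drop_succ, List.eraseIdx_eq_take_drop_succ,
        List.map_append, List.map_take, List.map_drop]
    have hmem := hKmin (K.eraseIdx j) ((K.eraseIdx_sublist j).trans hKsub)
      ⟨v * u, by rw [hmaperase, heq, hKv, Units.val_mul, mul_assoc]⟩
    rw [List.length_eraseIdx] at hmem
    simp only [hjK, if_pos] at hmem
    omega
  have hKbound : K.length < dav ↥H := by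
    have hcb := chain_bound hus L hL0 hLmin
    have hstabL : stab L.prod = H := by
      rw [hKv, hHdef]
      exact stab_unit_right π v
    rw [hstabL, hLdef, List.length_map] at hcb
    exact hcb
  obtain ⟨C, hC⟩ := hKsub.exists_perm_append
  have hlenAC : A.length = K.length + C.length := by
    rw [hC.length_eq, List.length_append]
  have hlenC : dav ((Sˣ ⧸ H) × S') ≤ C.length := by omega
  have hπeq : π = L.prod * (C.map Prod.fst).prod := by
    have h6 := (hC.map Prod.fst).prod_eq
    rw [List.map_append, List.prod_append] at h6
    exact h6
  have hexist : ∀ a ∈ C.map Prod.fst, ∃ u : Sˣ, L.prod * a = L.prod * u := by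
    intro a ha
    have hperm := List.perm_cons_erase ha
    have hq : (C.map Prod.fst).prod = a * ((C.map Prod.fst).erase a).prod := by
      rw [hperm.prod_eq, List.prod_cons]
    have hπfull : π = (L.prod * a) * ((C.map Prod.fst).erase a).prod := by
      rw [hπeq, hq, ← mul_assoc]
    have hLa0 : L.prod * a ∉ ({0} : Set S) := by
      simp only [Set.mem_singleton_iff]
      intro h0
      exact hπ (by rw [hπfull, h0, zero_mul])
    apply hus L.prod a hLa0
    apply Set.Subset.antisymm
    · intro u hu
      simp only [Set.mem_setOf_eq] at hu ⊢
      rw [← mul_assoc, hu]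
    · intro u hu
      simp only [Set.mem_setOf_eq] at hu ⊢
      have hπu : (u : S) * π = π := by
        rw [hπfull, ← mul_assoc, hu]
      rw [hKv, ← mul_assoc, hπu]
  set F : S → Sˣ := fun a => if h : ∃ u : Sˣ, L.prod * a = L.prod * u then h.choose else 1
    with hFdef
  have hFspec : ∀ a ∈ C.map Prod.fst, L.prod * a = L.prod * F a := by
    intro a ha
    have h := hexist a ha
    simp only [hFdef, dif_pos h]
    exact h.choose_spec
  have hQred : Reducible (C.map (fun c : S × S' =>
      ((QuotientGroup.mk (F c.1) : Sˣ ⧸ H), c.2))) := by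
    apply reducible_of_dav_le
    rw [List.length_map]
    exact hlenC
  obtain ⟨E', hE', hE'l, hE'p⟩ := hQred
  obtain ⟨E, hE, rfl⟩ := List.sublist_map_iff.1 hE'
  rw [List.length_map, List.length_map] at hE'l
  -- second components agree
  have hsnd : (E.map Prod.snd).prod = (C.map Prod.snd).prod := by
    have h7 := congrArg Prod.snd hE'p
    rw [snd_prod, snd_prod, List.map_map, List.map_map] at h7
    exact h7
  -- first components agree modulo H
  have hquot : (QuotientGroup.mk' H) (E.map (fun c : S × S' => F c.1)).prod
      = (QuotientGroup.mk' H) (C.map (fun c : S × S' => F c.1)).prod := by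
    have h7 := congrArg Prod.fst hE'p
    rw [fst_prod, fst_prod, List.map_map, List.map_map] at h7
    have h8 : ((E.map (fun c : S × S' => F c.1)).map (QuotientGroup.mk' H)).prod
        = ((C.map (fun c : S × S' => F c.1)).map (QuotientGroup.mk' H)).prod := by
      rw [List.map_map, List.map_map]
      exact h7
    rw [← MonoidHom.map_list_prod, ← MonoidHom.map_list_prod] at h8
    exact h8
  obtain ⟨z, hzH, hz⟩ := ((QuotientGroup.mk'_eq_mk' H).1 hquot)
  have hxy : (E.map (fun c : S × S' => F c.1)).prod
      = (C.map (fun c : S × S' => F c.1)).prod * z⁻¹ := by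
    rw [eq_mul_inv_iff_mul_eq]
    exact hz
  have hz1H : z⁻¹ ∈ H := H.inv_mem hzH
  have hz1π : ((z⁻¹ : Sˣ) : S) * π = π := hz1H
  -- assemble
  apply reducible_of_perm hC
  refine ⟨K ++ E, (List.Sublist.refl K).append hE, ?_, ?_⟩
  · simp only [List.length_append]
    omega
  · apply prod_eq_of_components
    · rw [List.map_append, List.map_append, List.prod_append, List.prod_append]
      have hreplE : L.prod * (E.map Prod.fst).prod
          = L.prod * ((E.map Prod.fst).map (fun a => ((F a : Sˣ) : S))).prod :=
        repl _ _ _ (fun a ha => hFspec a ((hE.map Prod.fst).subset ha))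
      have hreplC : L.prod * (C.map Prod.fst).prod
          = L.prod * ((C.map Prod.fst).map (fun a => ((F a : Sˣ) : S))).prod :=
        repl _ _ _ (fun a ha => hFspec a ha)
      have hcoeE : ((E.map Prod.fst).map (fun a => ((F a : Sˣ) : S))).prod
          = (((E.map (fun c : S × S' => F c.1)).prod : Sˣ) : S) := by
        have h9 := (Units.coeHom S).map_list_prod (E.map (fun c : S × S' => F c.1))
        rw [List.map_map] at h9
        rw [List.map_map]
        exact h9.symm
      have hcoeC : ((C.map Prod.fst).map (fun a => ((F a : Sˣ) : S))).prod
          = (((C.map (fun c : S × S' => F c.1)).prod : Sˣ) : S) := by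
        have h9 := (Units.coeHom S).map_list_prod (C.map (fun c : S × S' => F c.1))
        rw [List.map_map] at h9
        rw [List.map_map]
        exact h9.symm
      calc (K.map Prod.fst).prod * (E.map Prod.fst).prod
          = L.prod * ((E.map Prod.fst).map (fun a => ((F a : Sˣ) : S))).prod := hreplE
        _ = L.prod * (((E.map (fun c : S × S' => F c.1)).prod : Sˣ) : S) := by rw [hcoeE]
        _ = L.prod * ((((C.map (fun c : S × S' => F c.1)).prod * z⁻¹ : Sˣ) : S)) := by
            rw [hxy]
        _ = (L.prod * (((C.map (fun c : S × S' => F c.1)).prod : Sˣ) : S))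
              * ((z⁻¹ : Sˣ) : S) := by
            rw [Units.val_mul, mul_assoc]
        _ = (L.prod * ((C.map Prod.fst).map (fun a => ((F a : Sˣ) : S))).prod)
              * ((z⁻¹ : Sˣ) : S) := by rw [hcoeC]
        _ = (L.prod * (C.map Prod.fst).prod) * ((z⁻¹ : Sˣ) : S) := by rw [← hreplC]
        _ = ((z⁻¹ : Sˣ) : S) * π := by rw [← hπeq, mul_comm]
        _ = π := hz1π
        _ = (K.map Prod.fst).prod * (C.map Prod.fst).prod := hπeq
    · rw [List.map_append, List.map_append, List.prod_append, List.prod_append, hsnd]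

end MainCases

end DavAux

theorem davenport_prod_of_delta_zero {S : Type*} [CommMonoidWithZero S] [Finite S]
    (hus : UnitStabilizedPair S ({0} : Set S))
    (hD : davenport S = davenport Sˣ)
    {S' : Type*} [CommMonoid S'] [Finite S'] :
    davenport (S × S') = davenport (Sˣ × S') := by
  classical
  have hDnat : DavAux.dav S = DavAux.dav Sˣ := by
    rw [DavAux.davenport_eq, DavAux.davenport_eq] at hD
    exact_mod_cast hD
  have hinst1 : DavAux.dav S' + DavAux.dav Sˣ ≤ DavAux.dav (Sˣ × S') + 1 := by
    apply DavAux.dav_lower (MonoidHom.snd Sˣ S') (MonoidHom.inl Sˣ S')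
      (fun x => (1, x)) (fun x => rfl) (fun p => rfl)
    intro c a b hab
    have h1 : c.1 * a = c.1 * b := congrArg Prod.fst hab
    exact mul_left_cancel h1
  set n := DavAux.dav (Sˣ × S') with hn
  have hred : ∀ A : List (S × S'), A.length = n → Reducible A := by
    intro A hA
    by_cases hπ : (A.map Prod.fst).prod = 0
    · exact DavAux.case_zero A hπ (by rw [hA]; omega)
    · refine DavAux.case_nonzero hus A hπ ?_
      set H := DavAux.stab ((A.map Prod.fst).prod) with hH
      have hinst2 : DavAux.dav ((Sˣ ⧸ H) × S') + DavAux.dav ↥H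
          ≤ DavAux.dav (Sˣ × S') + 1 := by
        apply DavAux.dav_lower ((QuotientGroup.mk' H).prodMap (MonoidHom.id S'))
          ((H.subtype).prod 1) (fun x => ((Quotient.out x.1 : Sˣ), x.2))
        · intro x
          exact Prod.ext_iff.2 ⟨QuotientGroup.out_eq' x.1, rfl⟩
        · intro p
          exact Prod.ext_iff.2 ⟨(QuotientGroup.eq_one_iff (p : Sˣ)).2 p.2, rfl⟩
        · intro c a b hab
          have h1 : c.1 * (a : Sˣ) = c.1 * (b : Sˣ) := congrArg Prod.fst hab
          exact Subtype.ext (mul_left_cancel h1)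
      rw [hA]
      omega
  have h1 : DavAux.dav (S × S') ≤ n :=
    Nat.sInf_le (show n ∈ {m | DavAux.good (S × S') m} from
      ⟨by rw [hn]; exact DavAux.dav_pos, hred⟩)
  have h2 : n ≤ DavAux.dav (S × S') := by
    apply DavAux.dav_le_of_inj ((Units.coeHom S).prodMap (MonoidHom.id S'))
    intro x y hxy
    have ha := congrArg (Prod.fst : S × S' → S) hxy
    have hb := congrArg (Prod.snd : S × S' → S') hxy
    exact Prod.ext_iff.2 ⟨Units.ext ha, hb⟩
  rw [DavAux.davenport_eq, DavAux.davenport_eq]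
  exact_mod_cast Nat.cast_inj.2 (le_antisymm h1 h2)
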